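/- Let C be a nonempty closed proper subset of Euclidean space ℝ^n. Let x ∈ ℝ^n with x ∉ C, and suppose the function z ↦ dist(z, C) is (Fréchet) differentiable at x. Then x has a unique best approximation y(x) ∈ C, and the derivative satisfies ∂dist(·, C)(x)(u) = ⟨u, x − y(x)⟩ / dist(x, C) for every u ∈ ℝ^n. -/

import Mathlib

/-- If the distance function to a closed proper set `C ⊆ ℝⁿ` is differentiable
at `x ∉ C`, then `x` has a unique best approximation `y ∈ C`, and the derivative
is `u ↦ ⟨u, x - y⟩ / dist(x, C)`. -/
theorem unique_best_approx_of_differentiable_dist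
    (n : ℕ) (C : Set (EuclideanSpace ℝ (Fin n))) (hne : C.Nonempty)
    (hcl : IsClosed C) (hproper : C ≠ Set.univ)
    (x : EuclideanSpace ℝ (Fin n)) (hxC : x ∉ C)
    (D : EuclideanSpace ℝ (Fin n) →L[ℝ] ℝ)
    (hD : HasFDerivAt (fun z => Metric.infDist z C) D x) :
    (∃! y, y ∈ C ∧ dist x y = Metric.infDist x C) ∧
      ∀ y ∈ C, dist x y = Metric.infDist x C →
        ∀ u, D u = (inner ℝ u (x - y) : ℝ) / Metric.infDist x C := by
  set d := Metric.infDist x C with hd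
  have hdpos : 0 < d := (hcl.notMem_iff_infDist_pos hne).1 hxC
  set w : EuclideanSpace ℝ (Fin n) := (InnerProductSpace.toDual ℝ _).symm D with hw
  have hwD : ∀ u, (inner ℝ w u : ℝ) = D u := fun u =>
    InnerProductSpace.toDual_symm_apply
  have hwnorm : ‖w‖ ≤ 1 := by
    have h1 : ‖D‖ ≤ 1 := by
      simpa using hD.le_of_lipschitz (Metric.lipschitz_infDist_pt C)
    have h2 : ‖w‖ = ‖D‖ := (InnerProductSpace.toDual ℝ _).symm.norm_map D
    linarith
  -- key: any best approximation y satisfies x - y = d • w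
  have key : ∀ y ∈ C, dist x y = d → x - y = d • w := by
    intro y hyC hyd
    set v := y - x with hv
    have hnv : ‖x - y‖ = d := by rw [← hyd, dist_eq_norm]
    have hline : HasDerivAt (fun t : ℝ => x + t • v) v 0 := by
      simpa using ((hasDerivAt_id (0:ℝ)).smul_const v).const_add x
    have hcomp : HasDerivAt (fun t : ℝ => Metric.infDist (x + t • v) C) (D v) 0 := by
      have h0 : x + (0:ℝ) • v = x := by simp
      exact (show HasFDerivAt (fun z => Metric.infDist z C) D (x + (0:ℝ) • v) by rw [h0]; exact hD).comp_hasDerivAt 0 hline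
    have hval : ∀ t ∈ Set.Ioo (0:ℝ) 1, Metric.infDist (x + t • v) C = (1 - t) * d := by
      intro t ht
      have hxy : x + t • v - y = (1 - t) • (x - y) := by
        rw [hv]; module
      have h1 : Metric.infDist (x + t • v) C ≤ (1 - t) * d := by
        have hle := Metric.infDist_le_dist_of_mem (x := x + t • v) hyC
        rw [dist_eq_norm, hxy, norm_smul, hnv,
          Real.norm_eq_abs, abs_of_nonneg (by linarith [ht.2] : (0:ℝ) ≤ 1 - t)] at hle
        exact hle
      have h2 : (1 - t) * d ≤ Metric.infDist (x + t • v) C := by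
        have hlip := Metric.infDist_le_infDist_add_dist (x := x) (y := x + t • v) (s := C)
        have hxy2 : x - (x + t • v) = t • (x - y) := by rw [hv]; module
        rw [dist_eq_norm, hxy2, norm_smul, hnv, Real.norm_eq_abs, abs_of_pos ht.1,
          ← hd] at hlip
        linarith
      linarith
    have hDv : D v = -d := by
      have hslope := hasDerivAt_iff_tendsto_slope.1 hcomp
      have h1 : Filter.Tendsto (slope (fun t : ℝ => Metric.infDist (x + t • v) C) 0)
          (nhdsWithin 0 (Set.Ioi 0)) (nhds (D v)) :=
        hslope.mono_left (nhdsWithin_mono _ (fun t ht => ne_of_gt ht))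
      have h2 : Filter.Tendsto (slope (fun t : ℝ => Metric.infDist (x + t • v) C) 0)
          (nhdsWithin 0 (Set.Ioi 0)) (nhds (-d)) := by
        apply Filter.Tendsto.congr' _ tendsto_const_nhds
        filter_upwards [Ioo_mem_nhdsGT_of_mem (by constructor <;> norm_num : (0:ℝ) ∈ Set.Ico 0 1)] with t ht
        have hne0 : t ≠ 0 := ne_of_gt ht.1
        rw [slope_def_field, hval t ht]
        have h0 : Metric.infDist (x + (0:ℝ) • v) C = d := by simp [hd]
        rw [h0]
        field_simp
        ring
      exact tendsto_nhds_unique h1 h2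
    have hinner : (inner ℝ w (x - y) : ℝ) = d := by
      have h1 : (inner ℝ w (x - y) : ℝ) = - (inner ℝ w v : ℝ) := by
        rw [hv, ← inner_neg_right]; congr 1; abel
      rw [h1, hwD v, hDv]; ring
    -- Cauchy-Schwarz equality
    have hw1 : ‖w‖ = 1 := by
      by_contra hne1
      have hlt : ‖w‖ < 1 := lt_of_le_of_ne hwnorm hne1
      have hcs := real_inner_le_norm w (x - y)
      rw [hinner, hnv] at hcs
      nlinarith
    have heq : (inner ℝ w (x - y) : ℝ) = ‖w‖ * ‖x - y‖ := by
      rw [hw1, hnv, hinner]; ring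
    have := inner_eq_norm_mul_iff_real.1 heq
    -- ‖x - y‖ • w = ‖w‖ • (x - y)
    rw [hnv, hw1, one_smul] at this
    exact this.symm
  obtain ⟨y₀, hy₀C, hy₀d⟩ := hcl.exists_infDist_eq_dist hne x
  refine ⟨⟨y₀, ⟨hy₀C, hy₀d.symm⟩, ?_⟩, ?_⟩
  · rintro y ⟨hyC, hyd⟩
    have h1 := key y hyC hyd
    have h2 := key y₀ hy₀C hy₀d.symm
    exact sub_right_injective (h1.trans h2.symm)
  · intro y hyC hyd u
    have h1 := key y hyC hyd
    have : D u = (inner ℝ w u : ℝ) := (hwD u).symm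
    rw [this, real_inner_comm, h1, real_inner_smul_right]
    field_simp
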